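/- Let K_1, K_2 be sections of the standard middle thirds Cantor set, and let g be a continuously differentiable monotone function with 1 < g' < 3 on the convex hull of K_1. If K_2 and g(K_1) are linked, then K_2 ∩ g(K_1) ≠ ∅. -/

import Mathlib

open Set

/-- A Cantor set: a non-empty compact, perfect, totally disconnected subset of ℝ. -/
def IsCantorSet (K : Set ℝ) : Prop :=
  K.Nonempty ∧ IsCompact K ∧ Perfect K ∧ IsTotallyDisconnected K

/-- `(a,b)` is a bounded gap of `K`: a bounded connected component of the complement. -/
def IsGap (K : Set ℝ) (a b : ℝ) : Prop :=
  a < b ∧ a ∈ K ∧ b ∈ K ∧ Set.Ioo a b ∩ K = ∅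

/-- Left endpoints of gaps to the right of `u` of length at least `ℓ` (or the right extreme of `K`). -/
def rightTargets (K : Set ℝ) (u ℓ : ℝ) : Set ℝ :=
  {a | u < a ∧ ((∃ b, IsGap K a b ∧ ℓ ≤ b - a) ∨ a = sSup K)}

/-- Right endpoints of gaps to the left of `u` of length at least `ℓ` (or the left extreme of `K`). -/
def leftTargets (K : Set ℝ) (u ℓ : ℝ) : Set ℝ :=
  {b | b < u ∧ ((∃ a, IsGap K a b ∧ ℓ ≤ b - a) ∨ b = sInf K)}

/-- The set of bridge/gap ratios of `K` at endpoints of bounded gaps. -/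
def thicknessValues (K : Set ℝ) : Set ℝ :=
  {r | ∃ a b, IsGap K a b ∧
    (r = (sInf (rightTargets K b (b - a)) - b) / (b - a) ∨
     r = (a - sSup (leftTargets K a (b - a))) / (b - a))}

/-- Newhouse thickness of `K`. -/
noncomputable def thickness (K : Set ℝ) : ℝ := sInf (thicknessValues K)

def rightTargetsEps (K : Set ℝ) (ε u ℓ : ℝ) : Set ℝ :=
  {a | u < a ∧ ((∃ b, IsGap K a b ∧ (1 - ε) * ℓ < b - a) ∨ a = sSup K)}

def leftTargetsEps (K : Set ℝ) (ε u ℓ : ℝ) : Set ℝ :=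
  {b | b < u ∧ ((∃ a, IsGap K a b ∧ (1 - ε) * ℓ < b - a) ∨ b = sInf K)}

def epsThicknessValues (K : Set ℝ) (ε : ℝ) : Set ℝ :=
  {r | ∃ a b, IsGap K a b ∧
    (r = (sInf (rightTargetsEps K ε b (b - a)) - b) / (b - a) ∨
     r = (a - sSup (leftTargetsEps K ε a (b - a))) / (b - a))}

/-- The `ε`-thickness of `K`. -/
noncomputable def epsThickness (K : Set ℝ) (ε : ℝ) : ℝ := sInf (epsThicknessValues K ε)

/-- Two bounded subsets of ℝ are linked if the interiors of their convex hulls intersect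
but neither is contained in the other. -/
def Linked (K1 K2 : Set ℝ) : Prop :=
  (Set.Ioo (sInf K1) (sSup K1) ∩ Set.Ioo (sInf K2) (sSup K2)).Nonempty ∧
  ¬ Set.Ioo (sInf K1) (sSup K1) ⊆ Set.Ioo (sInf K2) (sSup K2) ∧
  ¬ Set.Ioo (sInf K2) (sSup K2) ⊆ Set.Ioo (sInf K1) (sSup K1)

/-- The standard middle-thirds Cantor set. -/
noncomputable def cantorThirds : Set ℝ :=
  ⋂ n : ℕ,
    (fun S : Set ℝ => (fun x : ℝ => x / 3) '' S ∪ (fun x : ℝ => x / 3 + 2/3) '' S)^[n]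
      (Set.Icc 0 1)

/-- A section of the middle-thirds Cantor set: a scaled translated copy of it sitting inside it. -/
def IsCantorSection (S : Set ℝ) : Prop :=
  ∃ (n : ℕ) (a : ℝ), S = (fun x : ℝ => a + x / 3 ^ n) '' cantorThirds ∧ S ⊆ cantorThirds

/-- The open wedge at `x`. -/
def Wedge (x : ℝ × ℝ) : Set (ℝ × ℝ) :=
  {y | y.2 - x.2 < y.1 - x.1 ∧ y.1 - x.1 < 3 * (y.2 - x.2)}

namespace CP
open Filter Topology


def F : Set ℝ → Set ℝ := fun S => (fun x : ℝ => x / 3) '' S ∪ (fun x : ℝ => x / 3 + 2/3) '' S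

lemma cantor_def : cantorThirds = ⋂ n : ℕ, F^[n] (Set.Icc 0 1) := rfl

lemma mem_cantor {x : ℝ} : x ∈ cantorThirds ↔ ∀ n, x ∈ F^[n] (Set.Icc 0 1) := by
  rw [cantor_def]; exact Set.mem_iInter

lemma cantor_subset_Icc : cantorThirds ⊆ Set.Icc (0:ℝ) 1 := fun x hx => by
  have := mem_cantor.1 hx 0
  simpa using this

lemma zero_mem : (0:ℝ) ∈ cantorThirds := by
  rw [mem_cantor]
  intro n
  induction n with
  | zero => simp
  | succ n ih =>
    rw [Function.iterate_succ_apply']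
    exact Or.inl ⟨0, ih, by norm_num⟩

lemma one_mem : (1:ℝ) ∈ cantorThirds := by
  rw [mem_cantor]
  intro n
  induction n with
  | zero => simp
  | succ n ih =>
    rw [Function.iterate_succ_apply']
    exact Or.inr ⟨1, ih, by norm_num⟩

lemma third_mem {x : ℝ} (hx : x ∈ cantorThirds) : x / 3 ∈ cantorThirds := by
  rw [mem_cantor]
  intro n
  match n with
  | 0 =>
    have := cantor_subset_Icc hx
    simp only [Function.iterate_zero_apply]
    constructor <;> [linarith [this.1]; linarith [this.2]]
  | n+1 =>
    rw [Function.iterate_succ_apply']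
    exact Or.inl ⟨x, mem_cantor.1 hx n, rfl⟩

lemma third_add_mem {x : ℝ} (hx : x ∈ cantorThirds) : x / 3 + 2/3 ∈ cantorThirds := by
  rw [mem_cantor]
  intro n
  match n with
  | 0 =>
    have := cantor_subset_Icc hx
    simp only [Function.iterate_zero_apply]
    constructor <;> [linarith [this.1]; linarith [this.2]]
  | n+1 =>
    rw [Function.iterate_succ_apply']
    exact Or.inr ⟨x, mem_cantor.1 hx n, rfl⟩

lemma isClosed_iter (n : ℕ) : IsClosed (F^[n] (Set.Icc (0:ℝ) 1)) := by
  induction n with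
  | zero => simpa using isClosed_Icc
  | succ n ih =>
    rw [Function.iterate_succ_apply']
    have h1 : (fun x : ℝ => x / 3) '' (F^[n] (Set.Icc (0:ℝ) 1))
        = (fun x : ℝ => 3 * x) ⁻¹' (F^[n] (Set.Icc (0:ℝ) 1)) := by
      ext x
      constructor
      · rintro ⟨y, hy, rfl⟩; simpa [mul_div_cancel₀] using hy
      · intro hx; exact ⟨3 * x, hx, by ring⟩
    have h2 : (fun x : ℝ => x / 3 + 2/3) '' (F^[n] (Set.Icc (0:ℝ) 1))
        = (fun x : ℝ => 3 * x - 2) ⁻¹' (F^[n] (Set.Icc (0:ℝ) 1)) := by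
      ext x
      constructor
      · rintro ⟨y, hy, rfl⟩
        have : 3 * (y / 3 + 2/3) - 2 = y := by ring
        simpa [this] using hy
      · intro hx; exact ⟨3 * x - 2, hx, by ring⟩
    exact (h1 ▸ ih.preimage (by continuity)).union (h2 ▸ ih.preimage (by continuity))

lemma isClosed_cantor : IsClosed cantorThirds := by
  rw [cantor_def]; exact isClosed_iInter isClosed_iter




noncomputable def w (k : ℕ) : ℝ := (1/3)^k

lemma w_pos (k : ℕ) : 0 < w k := pow_pos (by norm_num) k

lemma w_succ (k : ℕ) : w k = 3 * w (k+1) := by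
  simp only [w, pow_succ]; ring

lemma w_le {j k : ℕ} (h : j ≤ k) : w k ≤ w j :=
  pow_le_pow_of_le_one (by norm_num) (by norm_num) h

lemma w_zero : w 0 = 1 := rfl

def piece (K : Set ℝ) (k : ℕ) (x : ℝ) : Prop := ∀ t ∈ cantorThirds, x + t * w k ∈ K

lemma piece.left_mem {K k x} (h : piece K k x) : x ∈ K := by
  simpa using h 0 zero_mem

lemma piece.right_mem {K k x} (h : piece K k x) : x + w k ∈ K := by
  simpa using h 1 one_mem

lemma piece.p1_mem {K k x} (h : piece K k x) : x + w (k+1) ∈ K := by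
  have := h (1/3) (by simpa using third_mem one_mem)
  simpa [w, pow_succ, mul_comm, mul_assoc, mul_left_comm] using this

lemma piece.p2_mem {K k x} (h : piece K k x) : x + 2 * w (k+1) ∈ K := by
  have h23 : (2/3 : ℝ) ∈ cantorThirds := by simpa using third_add_mem zero_mem
  have := h (2/3) h23
  have e : (2/3 : ℝ) * w k = 2 * w (k+1) := by rw [w_succ k]; ring
  rwa [e] at this

def ChildL (x : ℝ) (k : ℕ) (x' : ℝ) (k' : ℕ) : Prop :=
  (x' = x ∧ k' = k) ∨ (k' = k + 1 ∧ (x' = x ∨ x' = x + 2 * w (k+1)))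

lemma piece.childL {K k x} (h : piece K k x) : piece K (k+1) x := by
  intro t ht
  have := h (t/3) (third_mem ht)
  have e : x + t / 3 * w k = x + t * w (k+1) := by rw [w_succ k]; ring
  rwa [e] at this

lemma piece.childR {K k x} (h : piece K k x) : piece K (k+1) (x + 2 * w (k+1)) := by
  intro t ht
  have := h (t/3 + 2/3) (third_add_mem ht)
  have e : x + (t/3 + 2/3) * w k = x + 2 * w (k+1) + t * w (k+1) := by rw [w_succ k]; ring
  rwa [e] at this

lemma piece.child {K k x k' x'} (h : piece K k x) (hc : ChildL x k x' k') :
    piece K k' x' := by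
  rcases hc with ⟨h1, h2⟩ | ⟨h1, h2 | h2⟩ <;> subst h1 <;> subst h2
  · exact h
  · exact h.childL
  · exact h.childR

lemma ChildL.nested {x k x' k'} (hc : ChildL x k x' k') :
    x ≤ x' ∧ x' + w k' ≤ x + w k ∧ k ≤ k' := by
  have := w_pos (k+1)
  rcases hc with ⟨rfl, rfl⟩ | ⟨rfl, rfl | rfl⟩
  · exact ⟨le_rfl, le_rfl, le_rfl⟩
  · exact ⟨le_rfl, by rw [w_succ k]; linarith, Nat.le_succ k⟩
  · exact ⟨by linarith, by rw [w_succ k]; linarith, Nat.le_succ k⟩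


def Cross (g : ℝ → ℝ) (α γ : ℝ) (k1 k2 : ℕ) : Prop :=
  (g α < γ ∧ γ < g (α + w k1) ∧ g (α + w k1) < γ + w k2) ∨
  (γ < g α ∧ g α < γ + w k2 ∧ γ + w k2 < g (α + w k1))

lemma Cross.case1 {g : ℝ → ℝ} {α γ : ℝ} {k1 k2 : ℕ}
    (h1 : g α < γ) (h2 : γ < g (α + w k1)) (h3 : g (α + w k1) < γ + w k2) :
    Cross g α γ k1 k2 := Or.inl ⟨h1, h2, h3⟩

lemma Cross.case2 {g : ℝ → ℝ} {α γ : ℝ} {k1 k2 : ℕ}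
    (h1 : γ < g α) (h2 : g α < γ + w k2) (h3 : γ + w k2 < g (α + w k1)) :
    Cross g α γ k1 k2 := Or.inr ⟨h1, h2, h3⟩

lemma step {g : ℝ → ℝ} {α γ : ℝ} {k1 k2 : ℕ}
    (hsl : ∀ u v, α ≤ u → u < v → v ≤ α + w k1 → v - u < g v - g u ∧ g v - g u < 3*(v-u))
    (hc : Cross g α γ k1 k2) :
    (∃ u, (u = α ∨ u = α + w (k1+1) ∨ u = α + 2*w (k1+1) ∨ u = α + w k1) ∧
      (g u = γ ∨ g u = γ + w (k2+1) ∨ g u = γ + 2*w (k2+1) ∨ g u = γ + w k2)) ∨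
    (∃ α' k1' γ' k2', ChildL α k1 α' k1' ∧ ChildL γ k2 γ' k2' ∧ k1 + k2 < k1' + k2' ∧
      Cross g α' γ' k1' k2') := by
  have hw1 := w_pos (k1+1)
  have hw2 := w_pos (k2+1)
  have hwk1 : w k1 = 3 * w (k1+1) := w_succ k1
  have hwk2 : w k2 = 3 * w (k2+1) := w_succ k2
  have hβ : α + w k1 = α + 2 * w (k1+1) + w (k1+1) := by rw [hwk1]; ring
  have b10 := hsl α (α + w (k1+1)) le_rfl (by linarith) (by linarith)
  have b21 := hsl (α + w (k1+1)) (α + 2 * w (k1+1)) (by linarith) (by linarith) (by linarith)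
  have b32 := hsl (α + 2 * w (k1+1)) (α + w k1) (by linarith) (by linarith) le_rfl
  have hsize : w k2 = w k1 ∨ 3 * w k2 ≤ w k1 ∨ 3 * w k1 ≤ w k2 := by
    rcases Nat.lt_trichotomy k1 k2 with h | h | h
    · exact Or.inr (Or.inl (by have := w_le (Nat.succ_le_of_lt h); linarith))
    · exact Or.inl (by rw [h])
    · exact Or.inr (Or.inr (by have := w_le (Nat.succ_le_of_lt h); linarith))
  have parentI : ChildL α k1 α k1 := Or.inl ⟨rfl, rfl⟩
  have childIL : ChildL α k1 α (k1+1) := Or.inr ⟨rfl, Or.inl rfl⟩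
  have childIR : ChildL α k1 (α + 2 * w (k1+1)) (k1+1) := Or.inr ⟨rfl, Or.inr rfl⟩
  have parentJ : ChildL γ k2 γ k2 := Or.inl ⟨rfl, rfl⟩
  have childJL : ChildL γ k2 γ (k2+1) := Or.inr ⟨rfl, Or.inl rfl⟩
  have childJR : ChildL γ k2 (γ + 2 * w (k2+1)) (k2+1) := Or.inr ⟨rfl, Or.inr rfl⟩
  rcases hc with ⟨hc1, hc2, hc3⟩ | ⟨hc1, hc2, hc3⟩
  · -- case 1 : A0 < γ < A3 < δ
    rcases lt_trichotomy γ (g (α + w (k1+1))) with h1 | h1 | h1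
    · -- child (I_L, J)
      exact Or.inr ⟨α, k1+1, γ, k2, childIL, parentJ, by omega,
        Cross.case1 hc1 h1 (by linarith [b21.1, b32.1])⟩
    · exact Or.inl ⟨α + w (k1+1), Or.inr (Or.inl rfl), Or.inl h1.symm⟩
    · rcases lt_trichotomy γ (g (α + 2 * w (k1+1))) with h2 | h2 | h2
      · -- A1 < γ < A2
        rcases lt_trichotomy (γ + 2 * w (k2+1)) (g (α + w k1)) with h3 | h3 | h3
        · -- child (I, J_R)
          exact Or.inr ⟨α, k1, γ + 2 * w (k2+1), k2+1, parentI, childJR, by omega,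
            Cross.case1 (by linarith) h3 (by linarith)⟩
        · exact Or.inl ⟨α + w k1, Or.inr (Or.inr (Or.inr rfl)), Or.inr (Or.inr (Or.inl h3.symm))⟩
        · rcases lt_trichotomy (g (α + w k1)) (γ + w (k2+1)) with h4 | h4 | h4
          · -- child (I, J_L)
            exact Or.inr ⟨α, k1, γ, k2+1, parentI, childJL, by omega,
              Cross.case1 hc1 hc2 h4⟩
          · exact Or.inl ⟨α + w k1, Or.inr (Or.inr (Or.inr rfl)), Or.inr (Or.inl h4)⟩
          · rcases lt_trichotomy (g (α + 2 * w (k1+1))) (γ + w (k2+1)) with h5 | h5 | h5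
            · -- child (I_R, J_L)
              exact Or.inr ⟨α + 2 * w (k1+1), k1+1, γ, k2+1, childIR, childJL, by omega,
                Cross.case2 h2 h5 (by rw [← hβ]; exact h4)⟩
            · exact Or.inl ⟨α + 2 * w (k1+1), Or.inr (Or.inr (Or.inl rfl)), Or.inr (Or.inl h5)⟩
            · exfalso
              rcases hsize with h | h | h <;>
                linarith [b21.1, b21.2, b32.1, b32.2]
      · exact Or.inl ⟨α + 2 * w (k1+1), Or.inr (Or.inr (Or.inl rfl)), Or.inl h2.symm⟩
      · -- child (I_R, J)
        exact Or.inr ⟨α + 2 * w (k1+1), k1+1, γ, k2, childIR, parentJ, by omega,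
          Cross.case1 h2 (by rw [← hβ]; exact hc2) (by rw [← hβ]; exact hc3)⟩
  · -- case 2 : γ < A0 < δ < A3
    rcases lt_trichotomy (g (α + 2 * w (k1+1))) (γ + w k2) with h1 | h1 | h1
    · -- child (I_R, J)
      exact Or.inr ⟨α + 2 * w (k1+1), k1+1, γ, k2, childIR, parentJ, by omega,
        Cross.case2 (by linarith [b10.1, b21.1]) h1 (by rw [← hβ]; exact hc3)⟩
    · exact Or.inl ⟨α + 2 * w (k1+1), Or.inr (Or.inr (Or.inl rfl)), Or.inr (Or.inr (Or.inr h1))⟩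
    · rcases lt_trichotomy (γ + w k2) (g (α + w (k1+1))) with h2 | h2 | h2
      · -- child (I_L, J)
        exact Or.inr ⟨α, k1+1, γ, k2, childIL, parentJ, by omega,
          Cross.case2 hc1 hc2 h2⟩
      · exact Or.inl ⟨α + w (k1+1), Or.inr (Or.inl rfl), Or.inr (Or.inr (Or.inr h2.symm))⟩
      · -- A1 < δ < A2
        rcases lt_trichotomy (g α) (γ + w (k2+1)) with h3 | h3 | h3
        · -- child (I, J_L)
          exact Or.inr ⟨α, k1, γ, k2+1, parentI, childJL, by omega,
            Cross.case2 hc1 h3 (by linarith)⟩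
        · exact Or.inl ⟨α, Or.inl rfl, Or.inr (Or.inl h3)⟩
        · rcases lt_trichotomy (γ + 2 * w (k2+1)) (g α) with h4 | h4 | h4
          · -- child (I, J_R)
            exact Or.inr ⟨α, k1, γ + 2 * w (k2+1), k2+1, parentI, childJR, by omega,
              Cross.case2 h4 (by linarith) (by linarith)⟩
          · exact Or.inl ⟨α, Or.inl rfl, Or.inr (Or.inr (Or.inl h4.symm))⟩
          · rcases lt_trichotomy (g (α + w (k1+1))) (γ + 2 * w (k2+1)) with h5 | h5 | h5
            · exfalso
              rcases hsize with h | h | h <;>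
                linarith [b10.1, b10.2, b21.1, b21.2]
            · exact Or.inl ⟨α + w (k1+1), Or.inr (Or.inl rfl), Or.inr (Or.inr (Or.inl h5))⟩
            · -- child (I_L, J_R)
              exact Or.inr ⟨α, k1+1, γ + 2 * w (k2+1), k2+1, childIL, childJR, by omega,
                Cross.case1 h4 h5 (by linarith)⟩
  



lemma mvt_slope {g : ℝ → ℝ} {A B : ℝ}
    (hg : ContDiffOn ℝ 1 g (Set.Icc A B))
    (hg' : ∀ x ∈ Set.Icc A B, 1 < derivWithin g (Set.Icc A B) x ∧
      derivWithin g (Set.Icc A B) x < 3)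
    {u v : ℝ} (hu : A ≤ u) (huv : u < v) (hv : v ≤ B) :
    v - u < g v - g u ∧ g v - g u < 3 * (v - u) := by
  have hd : DifferentiableOn ℝ g (Set.Icc A B) := hg.differentiableOn one_ne_zero
  have hderiv : ∀ x ∈ Set.Ioo u v, HasDerivAt g (derivWithin g (Set.Icc A B) x) x := by
    intro x hx
    have hxAB : Set.Icc A B ∈ 𝓝 x :=
      Icc_mem_nhds (lt_of_le_of_lt hu hx.1) (lt_of_lt_of_le hx.2 hv)
    have hdx : DifferentiableAt ℝ g x :=
      (hd x ⟨le_trans hu hx.1.le, le_trans hx.2.le hv⟩).differentiableAt hxAB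
    have : derivWithin g (Set.Icc A B) x = deriv g x := derivWithin_of_mem_nhds hxAB
    rw [this]
    exact hdx.hasDerivAt
  have hcont : ContinuousOn g (Set.Icc u v) :=
    hg.continuousOn.mono (Set.Icc_subset_Icc hu hv)
  obtain ⟨c, hc, hceq⟩ := exists_hasDerivAt_eq_slope g _ huv hcont hderiv
  have hmem : c ∈ Set.Icc A B := ⟨le_trans hu hc.1.le, le_trans hc.2.le hv⟩
  have h1 := (hg' c hmem).1
  have h2 := (hg' c hmem).2
  rw [hceq] at h1 h2
  have hvu : (0:ℝ) < v - u := by linarith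
  constructor
  · have := (lt_div_iff₀ hvu).1 h1; linarith
  · have := (div_lt_iff₀ hvu).1 h2; linarith


lemma w_eq_inv (n : ℕ) : w n = ((3:ℝ)^n)⁻¹ := by
  simp [w, one_div, inv_pow]

lemma section_facts {K : Set ℝ} {n : ℕ} {a : ℝ}
    (hK : K = (fun x : ℝ => a + x / 3 ^ n) '' cantorThirds) :
    piece K n a ∧ K ⊆ Set.Icc a (a + w n) ∧ sInf K = a ∧ sSup K = a + w n ∧ IsClosed K := by
  have hwn : ∀ x : ℝ, a + x / 3 ^ n = a + x * w n := by
    intro x; rw [w_eq_inv]; ring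
  have hpiece : piece K n a := by
    intro t ht
    rw [hK]
    exact ⟨t, ht, (hwn t).symm ▸ rfl⟩
  have hsub : K ⊆ Set.Icc a (a + w n) := by
    rintro x hx
    rw [hK] at hx
    obtain ⟨t, ht, rfl⟩ := hx
    obtain ⟨ht0, ht1⟩ := cantor_subset_Icc ht
    have hw := (w_pos n).le
    dsimp only
    rw [hwn t]
    constructor
    · nlinarith
    · nlinarith [mul_le_of_le_one_left hw ht1]
  have haK : a ∈ K := by simpa using hpiece 0 zero_mem
  have hbK : a + w n ∈ K := by simpa using hpiece 1 one_mem
  have hinf : sInf K = a :=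
    le_antisymm (csInf_le ⟨a, fun x hx => (hsub hx).1⟩ haK)
      (le_csInf ⟨a, haK⟩ fun x hx => (hsub hx).1)
  have hsup : sSup K = a + w n :=
    le_antisymm (csSup_le ⟨a, haK⟩ fun x hx => (hsub hx).2)
      (le_csSup ⟨a + w n, fun x hx => (hsub hx).2⟩ hbK)
  have hclosed : IsClosed K := by
    have hKeq : K = (fun x : ℝ => (x - a) / w n) ⁻¹' cantorThirds := by
      ext x
      rw [hK]
      constructor
      · rintro ⟨t, ht, rfl⟩
        have e : (a + t / 3 ^ n - a) / w n = t := by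
          rw [w_eq_inv]; field_simp; ring
        show (a + t / 3 ^ n - a) / w n ∈ cantorThirds
        rw [e]; exact ht
      · intro hx
        refine ⟨(x - a) / w n, hx, ?_⟩
        show a + ((x - a) / w n) / 3 ^ n = x
        rw [w_eq_inv]
        field_simp
        ring
    rw [hKeq]
    exact isClosed_cantor.preimage ((continuous_id.sub continuous_const).div_const _)
  exact ⟨hpiece, hsub, hinf, hsup, hclosed⟩




lemma exists_seq {X : Type*} (P : X → Prop) (R : X → X → Prop) (x0 : X) (h0 : P x0)
    (hstep : ∀ x, P x → ∃ y, P y ∧ R x y) :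
    ∃ f : ℕ → X, f 0 = x0 ∧ ∀ i, P (f i) ∧ R (f i) (f (i+1)) := by
  choose nxt hP hR using hstep
  let nxt' : {x // P x} → {x // P x} := fun q => ⟨nxt q.1 q.2, hP q.1 q.2⟩
  let F : ℕ → {x // P x} := fun i => nxt'^[i] ⟨x0, h0⟩
  have hFsucc : ∀ i, F (i+1) = nxt' (F i) := fun i => Function.iterate_succ_apply' nxt' i _
  refine ⟨fun i => (F i).1, rfl, fun i => ⟨(F i).2, ?_⟩⟩
  show R (F i).1 (F (i+1)).1
  rw [hFsucc i]
  exact hR (F i).1 (F i).2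

lemma le_of_freq {u v : ℕ → ℝ} {A B : ℝ} (hu : Tendsto u atTop (𝓝 A))
    (hv : Tendsto v atTop (𝓝 B)) (h : ∃ᶠ i in atTop, u i ≤ v i) : A ≤ B := by
  by_contra hAB
  push_neg at hAB
  have hev := hv.eventually_lt hu hAB
  obtain ⟨i, h1, h2⟩ := (h.and_eventually hev).exists
  exact absurd h1 (not_le.mpr h2)



theorem cantor_section_image_inter' (K1 K2 : Set ℝ)
    (h1 : IsCantorSection K1) (h2 : IsCantorSection K2) (g : ℝ → ℝ)
    (hg : ContDiffOn ℝ 1 g (Set.Icc (sInf K1) (sSup K1)))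
    (hmono : MonotoneOn g (Set.Icc (sInf K1) (sSup K1)))
    (hg' : ∀ x ∈ Set.Icc (sInf K1) (sSup K1),
      1 < derivWithin g (Set.Icc (sInf K1) (sSup K1)) x ∧
      derivWithin g (Set.Icc (sInf K1) (sSup K1)) x < 3)
    (hlink : Linked K2 (g '' K1)) :
    (K2 ∩ g '' K1).Nonempty := by
  classical
  obtain ⟨n, a, hK1eq, -⟩ := h1
  obtain ⟨m, c, hK2eq, -⟩ := h2
  obtain ⟨hpiece1, hsub1, hinf1, hsup1, hclosed1⟩ := section_facts hK1eq
  obtain ⟨hpiece2, hsub2, hinf2, hsup2, hclosed2⟩ := section_facts hK2eq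
  rw [hinf1, hsup1] at hg hmono hg'
  have hsl : ∀ u v : ℝ, a ≤ u → u < v → v ≤ a + w n →
      v - u < g v - g u ∧ g v - g u < 3 * (v - u) :=
    fun u v hu huv hv => mvt_slope hg hg' hu huv hv
  have hwn := w_pos n
  have hwm := w_pos m
  have haK1 : a ∈ K1 := hpiece1.left_mem
  have hbK1 : a + w n ∈ K1 := hpiece1.right_mem
  have hginc := hsl a (a + w n) le_rfl (by linarith) le_rfl
  have himg : ∀ y ∈ g '' K1, g a ≤ y ∧ y ≤ g (a + w n) := by
    rintro y ⟨t, ht, rfl⟩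
    have htI : t ∈ Set.Icc a (a + w n) := hsub1 ht
    exact ⟨hmono ⟨le_rfl, by linarith⟩ htI htI.1,
      hmono htI ⟨by linarith, le_rfl⟩ htI.2⟩
  have hgaK : g a ∈ g '' K1 := Set.mem_image_of_mem g haK1
  have hgbK : g (a + w n) ∈ g '' K1 := Set.mem_image_of_mem g hbK1
  have hinfg : sInf (g '' K1) = g a :=
    le_antisymm (csInf_le ⟨g a, fun y hy => (himg y hy).1⟩ hgaK)
      (le_csInf ⟨_, hgaK⟩ fun y hy => (himg y hy).1)
  have hsupg : sSup (g '' K1) = g (a + w n) :=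
    le_antisymm (csSup_le ⟨_, hgaK⟩ fun y hy => (himg y hy).2)
      (le_csSup ⟨g (a + w n), fun y hy => (himg y hy).2⟩ hgbK)
  obtain ⟨hne0, hns1, hns2⟩ := hlink
  rw [hinf2, hsup2, hinfg, hsupg] at hne0 hns1 hns2
  have hX : c < g (a + w n) ∧ g a < c + w m := by
    obtain ⟨z, hz2, hz1⟩ := hne0
    exact ⟨lt_trans hz2.1 hz1.2, lt_trans hz1.1 hz2.2⟩
  have hO1 : c < g a ∨ g (a + w n) < c + w m := by
    by_contra h
    push_neg at h
    exact hns1 fun z hz => ⟨lt_of_le_of_lt h.1 hz.1, lt_of_lt_of_le hz.2 h.2⟩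
  have hO2 : g a < c ∨ c + w m < g (a + w n) := by
    by_contra h
    push_neg at h
    exact hns2 fun z hz => ⟨lt_of_le_of_lt h.1 hz.1, lt_of_lt_of_le hz.2 h.2⟩
  have cross0 : Cross g a c n m := by
    rcases hO1 with h1 | h1 <;> rcases hO2 with h2 | h2
    · exact absurd h1 (not_lt.mpr h2.le)
    · exact Cross.case2 h1 hX.2 h2
    · exact Cross.case1 h2 hX.1 h1
    · exact absurd h1 (not_lt.mpr h2.le)
  by_contra hne
  rw [Set.not_nonempty_iff_eq_empty] at hne
  have hdone : ∀ u, u ∈ K1 → g u ∈ K2 → False := by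
    intro u hu hgu
    have : g u ∈ K2 ∩ g '' K1 := ⟨hgu, Set.mem_image_of_mem g hu⟩
    rw [hne] at this
    exact this
  have hstep : ∀ p : ℝ × ℕ × ℝ × ℕ,
      (piece K1 p.2.1 p.1 ∧ piece K2 p.2.2.2 p.2.2.1 ∧ Cross g p.1 p.2.2.1 p.2.1 p.2.2.2) →
      ∃ q : ℝ × ℕ × ℝ × ℕ,
        (piece K1 q.2.1 q.1 ∧ piece K2 q.2.2.2 q.2.2.1 ∧ Cross g q.1 q.2.2.1 q.2.1 q.2.2.2) ∧
        (p.1 ≤ q.1 ∧ q.1 + w q.2.1 ≤ p.1 + w p.2.1 ∧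
         p.2.2.1 ≤ q.2.2.1 ∧ q.2.2.1 + w q.2.2.2 ≤ p.2.2.1 + w p.2.2.2 ∧
         p.2.1 ≤ q.2.1 ∧ p.2.2.2 ≤ q.2.2.2 ∧ p.2.1 + p.2.2.2 < q.2.1 + q.2.2.2) := by
    rintro ⟨α, k1, γ, k2⟩ ⟨hp1, hp2, hcr⟩
    have hsl' : ∀ u v, α ≤ u → u < v → v ≤ α + w k1 →
        v - u < g v - g u ∧ g v - g u < 3 * (v - u) := by
      intro u v hu huv hv
      have hαa := (hsub1 hp1.left_mem).1
      have hβa := (hsub1 hp1.right_mem).2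
      exact hsl u v (le_trans hαa hu) huv (le_trans hv hβa)
    rcases step hsl' hcr with ⟨u, hu, hv⟩ | ⟨α', k1', γ', k2', hch1, hch2, hsum, hcr'⟩
    · exfalso
      apply hdone u
      · rcases hu with rfl | rfl | rfl | rfl
        exacts [hp1.left_mem, hp1.p1_mem, hp1.p2_mem, hp1.right_mem]
      · rcases hv with h | h | h | h <;> rw [h]
        exacts [hp2.left_mem, hp2.p1_mem, hp2.p2_mem, hp2.right_mem]
    · obtain ⟨hle1, hle2, hk1le⟩ := hch1.nested
      obtain ⟨hle3, hle4, hk2le⟩ := hch2.nested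
      exact ⟨(α', k1', γ', k2'), ⟨hp1.child hch1, hp2.child hch2, hcr'⟩,
        hle1, hle2, hle3, hle4, hk1le, hk2le, hsum⟩
  obtain ⟨f, hf0, hf⟩ := exists_seq _ _ ((a, n, c, m) : ℝ × ℕ × ℝ × ℕ)
    ⟨hpiece1, hpiece2, cross0⟩ hstep
  -- component sequences
  set sα : ℕ → ℝ := fun i => (f i).1 with hsα
  set sk1 : ℕ → ℕ := fun i => (f i).2.1 with hsk1
  set sγ : ℕ → ℝ := fun i => (f i).2.2.1 with hsγ
  set sk2 : ℕ → ℕ := fun i => (f i).2.2.2 with hsk2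
  have hp1 : ∀ i, piece K1 (sk1 i) (sα i) := fun i => (hf i).1.1
  have hp2 : ∀ i, piece K2 (sk2 i) (sγ i) := fun i => (hf i).1.2.1
  have hcr : ∀ i, Cross g (sα i) (sγ i) (sk1 i) (sk2 i) := fun i => (hf i).1.2.2
  have hrel : ∀ i, sα i ≤ sα (i+1) ∧ sα (i+1) + w (sk1 (i+1)) ≤ sα i + w (sk1 i) ∧
      sγ i ≤ sγ (i+1) ∧ sγ (i+1) + w (sk2 (i+1)) ≤ sγ i + w (sk2 i) ∧
      sk1 i ≤ sk1 (i+1) ∧ sk2 i ≤ sk2 (i+1) ∧ sk1 i + sk2 i < sk1 (i+1) + sk2 (i+1) :=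
    fun i => (hf i).2
  have hmono1 : Monotone sα := monotone_nat_of_le_succ fun i => (hrel i).1
  have hanti1 : Antitone (fun i => sα i + w (sk1 i)) :=
    antitone_nat_of_succ_le fun i => (hrel i).2.1
  have hmono2 : Monotone sγ := monotone_nat_of_le_succ fun i => (hrel i).2.2.1
  have hanti2 : Antitone (fun i => sγ i + w (sk2 i)) :=
    antitone_nat_of_succ_le fun i => (hrel i).2.2.2.1
  have hk1mono : Monotone sk1 := monotone_nat_of_le_succ fun i => (hrel i).2.2.2.2.1
  have hk2mono : Monotone sk2 := monotone_nat_of_le_succ fun i => (hrel i).2.2.2.2.2.1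
  have hsum : ∀ i, n + m + i ≤ sk1 i + sk2 i := by
    intro i
    induction i with
    | zero =>
      have e1 : sk1 0 = n := by simp only [hsk1, hf0]
      have e2 : sk2 0 = m := by simp only [hsk2, hf0]
      omega
    | succ i ih =>
      have := (hrel i).2.2.2.2.2.2
      omega
  -- limits
  have hbddα : BddAbove (Set.range sα) := by
    refine ⟨sα 0 + w (sk1 0), ?_⟩
    rintro _ ⟨i, rfl⟩
    calc sα i ≤ sα i + w (sk1 i) := by linarith [w_pos (sk1 i)]
    _ ≤ sα 0 + w (sk1 0) := hanti1 (Nat.zero_le i)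
  have hbddβ : BddBelow (Set.range fun i => sα i + w (sk1 i)) := by
    refine ⟨sα 0, ?_⟩
    rintro _ ⟨i, rfl⟩
    calc sα 0 ≤ sα i := hmono1 (Nat.zero_le i)
    _ ≤ sα i + w (sk1 i) := by linarith [w_pos (sk1 i)]
  have hbddγ : BddAbove (Set.range sγ) := by
    refine ⟨sγ 0 + w (sk2 0), ?_⟩
    rintro _ ⟨i, rfl⟩
    calc sγ i ≤ sγ i + w (sk2 i) := by linarith [w_pos (sk2 i)]
    _ ≤ sγ 0 + w (sk2 0) := hanti2 (Nat.zero_le i)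
  have hbddδ : BddBelow (Set.range fun i => sγ i + w (sk2 i)) := by
    refine ⟨sγ 0, ?_⟩
    rintro _ ⟨i, rfl⟩
    calc sγ 0 ≤ sγ i := hmono2 (Nat.zero_le i)
    _ ≤ sγ i + w (sk2 i) := by linarith [w_pos (sk2 i)]
  set x : ℝ := ⨆ i, sα i with hxdef
  set x' : ℝ := ⨅ i, (sα i + w (sk1 i)) with hx'def
  set y : ℝ := ⨆ i, sγ i with hydef
  set y' : ℝ := ⨅ i, (sγ i + w (sk2 i)) with hy'def
  have hx : Tendsto sα atTop (𝓝 x) := tendsto_atTop_ciSup hmono1 hbddα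
  have hx' : Tendsto (fun i => sα i + w (sk1 i)) atTop (𝓝 x') :=
    tendsto_atTop_ciInf hanti1 hbddβ
  have hy : Tendsto sγ atTop (𝓝 y) := tendsto_atTop_ciSup hmono2 hbddγ
  have hy' : Tendsto (fun i => sγ i + w (sk2 i)) atTop (𝓝 y') :=
    tendsto_atTop_ciInf hanti2 hbddδ
  have hxK1 : x ∈ K1 :=
    hclosed1.mem_of_tendsto hx (Filter.Eventually.of_forall fun i => (hp1 i).left_mem)
  have hx'K1 : x' ∈ K1 :=
    hclosed1.mem_of_tendsto hx' (Filter.Eventually.of_forall fun i => (hp1 i).right_mem)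
  have hyK2 : y ∈ K2 :=
    hclosed2.mem_of_tendsto hy (Filter.Eventually.of_forall fun i => (hp2 i).left_mem)
  have hy'K2 : y' ∈ K2 :=
    hclosed2.mem_of_tendsto hy' (Filter.Eventually.of_forall fun i => (hp2 i).right_mem)
  have hgc : ContinuousOn g (Set.Icc a (a + w n)) := hg.continuousOn
  have hgx : Tendsto (fun i => g (sα i)) atTop (𝓝 (g x)) := by
    have h1 : Tendsto sα atTop (𝓝[Set.Icc a (a + w n)] x) :=
      tendsto_nhdsWithin_iff.mpr
        ⟨hx, Filter.Eventually.of_forall fun i => hsub1 (hp1 i).left_mem⟩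
    exact (hgc x (hsub1 hxK1)).tendsto.comp h1
  have hgx' : Tendsto (fun i => g (sα i + w (sk1 i))) atTop (𝓝 (g x')) := by
    have h1 : Tendsto (fun i => sα i + w (sk1 i)) atTop (𝓝[Set.Icc a (a + w n)] x') :=
      tendsto_nhdsWithin_iff.mpr
        ⟨hx', Filter.Eventually.of_forall fun i => hsub1 (hp1 i).right_mem⟩
    exact (hgc x' (hsub1 hx'K1)).tendsto.comp h1
  -- one of the widths tends to zero
  have key : x = x' ∨ y = y' := by
    have hwlim : Tendsto (fun k : ℕ => w k) atTop (𝓝 0) := by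
      simpa [w] using
        tendsto_pow_atTop_nhds_zero_of_lt_one (by norm_num : (0:ℝ) ≤ 1/3)
          (by norm_num : (1/3 : ℝ) < 1)
    have hcases : (∀ B, ∃ i, B ≤ sk1 i) ∨ (∀ B, ∃ i, B ≤ sk2 i) := by
      by_contra h
      push_neg at h
      obtain ⟨⟨B1, hB1⟩, ⟨B2, hB2⟩⟩ := h
      have h1 := hB1 (B1 + B2)
      have h2 := hB2 (B1 + B2)
      have h3 := hsum (B1 + B2)
      omega
    rcases hcases with hu | hu
    · left
      have hk1top : Tendsto sk1 atTop atTop :=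
        tendsto_atTop_atTop_of_monotone hk1mono hu
      have hw0 : Tendsto (fun i => w (sk1 i)) atTop (𝓝 0) := hwlim.comp hk1top
      have h2 : Tendsto (fun i => sα i + w (sk1 i)) atTop (𝓝 (x + 0)) := hx.add hw0
      have := tendsto_nhds_unique hx' h2
      rw [this, add_zero]
    · right
      have hk2top : Tendsto sk2 atTop atTop :=
        tendsto_atTop_atTop_of_monotone hk2mono hu
      have hw0 : Tendsto (fun i => w (sk2 i)) atTop (𝓝 0) := hwlim.comp hk2top
      have h2 : Tendsto (fun i => sγ i + w (sk2 i)) atTop (𝓝 (y + 0)) := hy.add hw0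
      have := tendsto_nhds_unique hy' h2
      rw [this, add_zero]
  -- frequently one of the two cross cases
  have hfreq : (∃ᶠ i in atTop, g (sα i) ≤ sγ i ∧ sγ i ≤ g (sα i + w (sk1 i)) ∧
        g (sα i + w (sk1 i)) ≤ sγ i + w (sk2 i)) ∨
      (∃ᶠ i in atTop, sγ i ≤ g (sα i) ∧ g (sα i) ≤ sγ i + w (sk2 i) ∧
        sγ i + w (sk2 i) ≤ g (sα i + w (sk1 i))) := by
    by_cases h : ∃ᶠ i in atTop, g (sα i) ≤ sγ i ∧ sγ i ≤ g (sα i + w (sk1 i)) ∧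
        g (sα i + w (sk1 i)) ≤ sγ i + w (sk2 i)
    · exact Or.inl h
    · right
      rw [Filter.not_frequently] at h
      refine Filter.Eventually.frequently (h.mono fun i hi => ?_)
      rcases hcr i with h1 | h2
      · exact absurd ⟨h1.1.le, h1.2.1.le, h1.2.2.le⟩ hi
      · exact ⟨h2.1.le, h2.2.1.le, h2.2.2.le⟩
  rcases hfreq with hfr | hfr
  · have e1 : g x ≤ y := le_of_freq hgx hy (hfr.mono fun i hi => hi.1)
    have e2 : y ≤ g x' := le_of_freq hy hgx' (hfr.mono fun i hi => hi.2.1)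
    have e3 : g x' ≤ y' := le_of_freq hgx' hy' (hfr.mono fun i hi => hi.2.2)
    rcases key with he | he
    · rw [← he] at e2
      exact hdone x hxK1 (by rw [le_antisymm e1 e2]; exact hyK2)
    · rw [← he] at e3
      exact hdone x' hx'K1 (by rw [le_antisymm e3 e2]; exact hyK2)
  · have e1 : y ≤ g x := le_of_freq hy hgx (hfr.mono fun i hi => hi.1)
    have e2 : g x ≤ y' := le_of_freq hgx hy' (hfr.mono fun i hi => hi.2.1)
    have e3 : y' ≤ g (x') := le_of_freq hy' hgx' (hfr.mono fun i hi => hi.2.2)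
    rcases key with he | he
    · rw [← he] at e3
      exact hdone x hxK1 (by rw [le_antisymm e2 e3]; exact hy'K2)
    · rw [he] at e1
      exact hdone x hxK1 (by rw [le_antisymm e2 e1]; exact hy'K2)

end CP

/-- the gap lemma for sections of the middle-thirds Cantor set. -/
theorem cantor_section_image_inter (K1 K2 : Set ℝ)
    (h1 : IsCantorSection K1) (h2 : IsCantorSection K2) (g : ℝ → ℝ)
    (hg : ContDiffOn ℝ 1 g (Set.Icc (sInf K1) (sSup K1)))
    (hmono : MonotoneOn g (Set.Icc (sInf K1) (sSup K1)))
    (hg' : ∀ x ∈ Set.Icc (sInf K1) (sSup K1),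
      1 < derivWithin g (Set.Icc (sInf K1) (sSup K1)) x ∧
      derivWithin g (Set.Icc (sInf K1) (sSup K1)) x < 3)
    (hlink : Linked K2 (g '' K1)) :
    (K2 ∩ g '' K1).Nonempty :=
  CP.cantor_section_image_inter' K1 K2 h1 h2 g hg hmono hg' hlink
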